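/- arXiv:1310.0404 — 5 statements merged into one kernel-verified Lean document; each statement's English description precedes it below -/
import Mathlib

section
/- Let α : ℝ → ℝ be differentiable with α₀ ≤ α(y) ≤ α₁ for all y, where 0 < α₀ ≤ α₁ < 2. Fix x ∈ ℝ and assume M := sup_{|y−x|≤3} |α′(y)| < ∞. Then for every R ∈ (0, 1], sup_{|y−x|≤3R} R^{−α(y)} ≤ 64^M · inf_{|y−x|≤3R} R^{−α(y)}. In particular, sup_{|y−x|≤2R} R^{−α(y)} ≤ 64^M · inf_{|y−x|≤3R} R^{−α(y)}, i.e. the stable-like family p^U(y, ξ) = |ξ|^{α(y)} satisfies the comparability condition (A2) with κ(x) = 64^M. -/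
/-- For `R ∈ (0,1]` we have `R^{-R} ≤ 2`. -/
lemma rpow_neg_self_le_two {R : ℝ} (hR : 0 < R) (hR1 : R ≤ 1) : R ^ (-R) ≤ 2 := by
  have hs : 0 < Real.sqrt R := Real.sqrt_pos.mpr hR
  have hlog : Real.log (1 / Real.sqrt R) ≤ 1 / Real.sqrt R - 1 :=
    Real.log_le_sub_one_of_pos (by positivity)
  have hlog2 : Real.log (1 / Real.sqrt R) = -Real.log R / 2 := by
    rw [Real.log_div one_ne_zero (ne_of_gt hs), Real.log_one, Real.log_sqrt hR.le]; ring
  have hsq : Real.sqrt R ^ 2 = R := Real.sq_sqrt hR.le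
  rw [hlog2] at hlog
  have h5 : 2 * R * (-Real.log R / 2) ≤ 2 * R * (1 / Real.sqrt R - 1) :=
    mul_le_mul_of_nonneg_left hlog (by positivity)
  have h7 : R * (1 / Real.sqrt R) = Real.sqrt R := by
    rw [mul_one_div]; exact Real.div_sqrt
  have h1 : -R * Real.log R ≤ 2 * (Real.sqrt R - R) := by nlinarith [h5, h7]
  have h2 : 2 * (Real.sqrt R - R) ≤ 1 / 2 := by
    nlinarith [sq_nonneg (2 * Real.sqrt R - 1), hsq]
  have h3 : (1 : ℝ) / 2 ≤ Real.log 2 := by linarith [Real.log_two_gt_d9]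
  calc R ^ (-R) = Real.exp (-R * Real.log R) := by
        rw [Real.rpow_def_of_pos hR]; ring_nf
    _ ≤ Real.exp (Real.log 2) := Real.exp_le_exp.mpr (by linarith)
    _ = 2 := Real.exp_log (by norm_num)

/-- For a differentiable index function `α : ℝ → [α₀, α₁] ⊂ (0,2)` with
`M = sup_{|y−x|≤3} |α'(y)| < ∞`, the stable-like family `p^U(y, 1/R) = R^{−α(y)}`
satisfies the comparability condition (A2): for all `R ∈ (0,1]`,
`sup_{|y−x|≤3R} R^{−α(y)} ≤ 64^M · inf_{|y−x|≤3R} R^{−α(y)}`, and in particular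
`sup_{|y−x|≤2R} R^{−α(y)} ≤ 64^M · inf_{|y−x|≤3R} R^{−α(y)}`. -/
theorem stable_like_comparability (α : ℝ → ℝ) (α₀ α₁ : ℝ)
    (h0 : 0 < α₀) (h01 : α₀ ≤ α₁) (h1 : α₁ < 2)
    (hdiff : Differentiable ℝ α) (hrange : ∀ y, α₀ ≤ α y ∧ α y ≤ α₁)
    (x M : ℝ)
    (hbdd : BddAbove ((fun y => |deriv α y|) '' {y | |y - x| ≤ 3}))
    (hM : M = sSup ((fun y => |deriv α y|) '' {y | |y - x| ≤ 3})) :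
    ∀ R : ℝ, 0 < R → R ≤ 1 →
      sSup ((fun y => R ^ (-α y)) '' {y | |y - x| ≤ 3 * R}) ≤
        (64 : ℝ) ^ M * sInf ((fun y => R ^ (-α y)) '' {y | |y - x| ≤ 3 * R}) ∧
      sSup ((fun y => R ^ (-α y)) '' {y | |y - x| ≤ 2 * R}) ≤
        (64 : ℝ) ^ M * sInf ((fun y => R ^ (-α y)) '' {y | |y - x| ≤ 3 * R}) := by
  intro R hR hR1
  have hK : 0 < (64 : ℝ) ^ M := Real.rpow_pos_of_pos (by norm_num) M
  have hxmem : x ∈ {y : ℝ | |y - x| ≤ 3} := by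
    simp only [Set.mem_setOf_eq, sub_self, abs_zero]; norm_num
  have hM0 : 0 ≤ M := by
    rw [hM]
    exact (abs_nonneg (deriv α x)).trans (le_csSup hbdd ⟨x, hxmem, rfl⟩)
  -- Lipschitz bound on the ball of radius 3 via MVT
  have hlip : ∀ y z : ℝ, |y - x| ≤ 3 → |z - x| ≤ 3 → |α z - α y| ≤ M * |z - y| := by
    intro y z hy hz
    have hconv : Convex ℝ (Metric.closedBall x 3) := convex_closedBall x 3
    have hbound : ∀ w ∈ Metric.closedBall x 3, ‖deriv α w‖ ≤ M := by
      intro w hw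
      rw [Real.norm_eq_abs, hM]
      exact le_csSup hbdd ⟨w, by simpa [Real.dist_eq] using hw, rfl⟩
    have := hconv.norm_image_sub_le_of_norm_deriv_le
      (fun w _ => hdiff w) hbound
      (by simpa [Metric.mem_closedBall, Real.dist_eq] using hy)
      (by simpa [Metric.mem_closedBall, Real.dist_eq] using hz)
    simpa [Real.norm_eq_abs] using this
  -- The key pointwise comparison
  have key : ∀ y z : ℝ, |y - x| ≤ 3 * R → |z - x| ≤ 3 * R →
      R ^ (-α y) ≤ (64 : ℝ) ^ M * R ^ (-α z) := by
    intro y z hy hz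
    have hy3 : |y - x| ≤ 3 := hy.trans (by nlinarith)
    have hz3 : |z - x| ≤ 3 := hz.trans (by nlinarith)
    have hzy : |z - y| ≤ 6 * R := by
      calc |z - y| ≤ |z - x| + |x - y| := abs_sub_le z x y
        _ = |z - x| + |y - x| := by rw [abs_sub_comm x y]
        _ ≤ 3 * R + 3 * R := add_le_add hz hy
        _ = 6 * R := by ring
    have hd : |α z - α y| ≤ 6 * R * M := by
      calc |α z - α y| ≤ M * |z - y| := hlip y z hy3 hz3
        _ ≤ M * (6 * R) := mul_le_mul_of_nonneg_left hzy hM0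
        _ = 6 * R * M := by ring
    have step : R ^ (α z - α y) ≤ (64 : ℝ) ^ M := by
      calc R ^ (α z - α y) ≤ R ^ (-(6 * R * M)) := by
            apply Real.rpow_le_rpow_of_exponent_ge hR hR1
            have := neg_abs_le (α z - α y)
            linarith
        _ = (R ^ (-R)) ^ (6 * M) := by
            rw [show -(6 * R * M) = -R * (6 * M) by ring, Real.rpow_mul hR.le]
        _ ≤ (2 : ℝ) ^ (6 * M) :=
            Real.rpow_le_rpow (Real.rpow_nonneg hR.le _)
              (rpow_neg_self_le_two hR hR1) (by positivity)
        _ = (64 : ℝ) ^ M := by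
            rw [Real.rpow_mul (by norm_num : (0:ℝ) ≤ 2), show ((2:ℝ) ^ (6:ℝ)) = 64 by
              rw [show (6:ℝ) = ((6:ℕ):ℝ) by norm_num, Real.rpow_natCast]; norm_num]
    calc R ^ (-α y) = R ^ (α z - α y) * R ^ (-α z) := by
          rw [← Real.rpow_add hR]; ring_nf
      _ ≤ (64 : ℝ) ^ M * R ^ (-α z) :=
          mul_le_mul_of_nonneg_right step (Real.rpow_nonneg hR.le _)
  have hxmem3R : x ∈ {y : ℝ | |y - x| ≤ 3 * R} := by
    simp only [Set.mem_setOf_eq, sub_self, abs_zero]; positivity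
  have hne3 : ((fun y => R ^ (-α y)) '' {y | |y - x| ≤ 3 * R}).Nonempty :=
    ⟨R ^ (-α x), x, hxmem3R, rfl⟩
  have bound : ∀ c : ℝ, 0 < c → c ≤ 3 →
      sSup ((fun y => R ^ (-α y)) '' {y | |y - x| ≤ c * R}) ≤
        (64 : ℝ) ^ M * sInf ((fun y => R ^ (-α y)) '' {y | |y - x| ≤ 3 * R}) := by
    intro c hc hc3
    have hxmemc : x ∈ {y : ℝ | |y - x| ≤ c * R} := by
      simp only [Set.mem_setOf_eq, sub_self, abs_zero]; positivity
    refine csSup_le ⟨R ^ (-α x), ⟨x, hxmemc, rfl⟩⟩ ?_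
    rintro a ⟨y, hy, rfl⟩
    rw [← div_le_iff₀' hK]
    apply le_csInf hne3
    rintro b ⟨z, hz, rfl⟩
    rw [div_le_iff₀' hK]
    exact key y z (hy.trans (by nlinarith)) hz
  exact ⟨bound 3 (by norm_num) le_rfl, bound 2 (by norm_num) (by norm_num)⟩
end

section
/- Let 0 < α₀ ≤ α₁ < 2 and let α : ℝ → [α₀, α₁] be continuously differentiable with bounded derivative. Fix x ∈ ℝ, c₁ > 0 and ρ₀ ∈ (0,1), and let f : (0, ρ₀) → (0, 1) be a function satisfying, for every ρ ∈ (0, ρ₀): f(ρ)^{α(x − 3 f(ρ))} = ρ and f(ρ) ≤ c₁ · ρ^{1/α₁}. Then lim_{ρ → 0⁺} ρ^{1/α(x)} / f(ρ) = 1. -/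
/-- For a stable-like index `α : ℝ → [α₀,α₁] ⊂ (0,2)`, continuously differentiable
with bounded derivative, if `f(ρ)` (the generalized inverse of `u(x,R) = R^{α(x−3R)}`)
satisfies `f(ρ)^{α(x − 3f(ρ))} = ρ` and `f(ρ) ≤ c₁ ρ^{1/α₁}` on `(0, ρ₀)`, then
`ρ^{1/α(x)} / f(ρ) → 1` as `ρ → 0⁺`. -/
theorem inverse_norming_asymptotics (α₀ α₁ : ℝ) (h0 : 0 < α₀) (h01 : α₀ ≤ α₁) (h1 : α₁ < 2)
    (α : ℝ → ℝ) (hα : ContDiff ℝ 1 α) (K : ℝ) (hK : ∀ y, |deriv α y| ≤ K)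
    (hrange : ∀ y, α y ∈ Set.Icc α₀ α₁)
    (x c₁ ρ₀ : ℝ) (hc₁ : 0 < c₁) (hρ₀ : 0 < ρ₀) (hρ₀1 : ρ₀ < 1)
    (f : ℝ → ℝ)
    (hf : ∀ ρ : ℝ, 0 < ρ → ρ < ρ₀ →
      0 < f ρ ∧ f ρ < 1 ∧ f ρ ^ α (x - 3 * f ρ) = ρ ∧ f ρ ≤ c₁ * ρ ^ (1 / α₁)) :
    Filter.Tendsto (fun ρ => ρ ^ (1 / α x) / f ρ) (nhdsWithin 0 (Set.Ioi 0)) (nhds 1) := by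
  have hαx : 0 < α x := lt_of_lt_of_le h0 (hrange x).1
  have hα1 : 0 < α₁ := lt_of_lt_of_le h0 h01
  have hK0 : 0 ≤ K := le_trans (abs_nonneg _) (hK 0)
  have hmem : ∀ᶠ ρ in nhdsWithin (0:ℝ) (Set.Ioi 0), 0 < ρ ∧ ρ < ρ₀ := by
    filter_upwards [self_mem_nhdsWithin,
      eventually_nhdsWithin_of_eventually_nhds
        (Filter.Tendsto.eventually_lt_const hρ₀ Filter.tendsto_id)] with ρ h1' h2'
    exact ⟨h1', h2'⟩
  -- Lipschitz bound on α
  have hlip : LipschitzWith K.toNNReal α := by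
    refine lipschitzWith_of_nnnorm_deriv_le (hα.differentiable one_ne_zero) fun y => ?_
    rw [← NNReal.coe_le_coe, coe_nnnorm, Real.norm_eq_abs, Real.coe_toNNReal K hK0]
    exact hK y
  have hαdiff : ∀ a b : ℝ, |α a - α b| ≤ K * |a - b| := by
    intro a b
    have := hlip.dist_le_mul a b
    rwa [Real.dist_eq, Real.dist_eq, Real.coe_toNNReal K hK0] at this
  -- f tends to 0 from the right
  have hf0 : Filter.Tendsto f (nhdsWithin (0:ℝ) (Set.Ioi 0)) (nhdsWithin 0 (Set.Ioi 0)) := by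
    have hb : Filter.Tendsto (fun ρ : ℝ => c₁ * ρ ^ (1 / α₁))
        (nhdsWithin (0:ℝ) (Set.Ioi 0)) (nhds 0) := by
      have hc : ContinuousAt (fun ρ : ℝ => ρ ^ (1 / α₁)) 0 :=
        Real.continuousAt_rpow_const 0 (1 / α₁) (Or.inr (by positivity))
      have h2 : Filter.Tendsto (fun ρ : ℝ => ρ ^ (1 / α₁))
          (nhdsWithin (0:ℝ) (Set.Ioi 0)) (nhds 0) := by
        have := hc.continuousWithinAt (s := Set.Ioi 0)
        simpa [ContinuousWithinAt, Real.zero_rpow (show (α₁:ℝ)⁻¹ ≠ 0 by positivity), one_div] using this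
      simpa using h2.const_mul c₁
    have h0' : Filter.Tendsto f (nhdsWithin (0:ℝ) (Set.Ioi 0)) (nhds 0) := by
      apply squeeze_zero'
      · filter_upwards [hmem] with ρ hρ using (hf ρ hρ.1 hρ.2).1.le
      · filter_upwards [hmem] with ρ hρ using (hf ρ hρ.1 hρ.2).2.2.2
      · exact hb
    refine tendsto_nhdsWithin_of_tendsto_nhds_of_eventually_within _ h0' ?_
    filter_upwards [hmem] with ρ hρ using (hf ρ hρ.1 hρ.2).1
  -- f ρ * |log (f ρ)| → 0
  have hfl : Filter.Tendsto (fun ρ => Real.log (f ρ) * f ρ)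
      (nhdsWithin (0:ℝ) (Set.Ioi 0)) (nhds 0) := by
    have := tendsto_log_mul_rpow_nhdsGT_zero (r := 1) one_pos
    simp only [Real.rpow_one] at this
    exact this.comp hf0
  -- the exponent tends to 0
  set E : ℝ → ℝ := fun ρ => (α (x - 3 * f ρ) - α x) / α x * Real.log (f ρ) with hE
  have hEt : Filter.Tendsto E (nhdsWithin (0:ℝ) (Set.Ioi 0)) (nhds 0) := by
    apply squeeze_zero_norm' (a := fun ρ => 3 * K / α x * |Real.log (f ρ) * f ρ|)
    · filter_upwards [hmem] with ρ hρ
      obtain ⟨hfp, hf1, -, -⟩ := hf ρ hρ.1 hρ.2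
      have hb : |α (x - 3 * f ρ) - α x| ≤ K * (3 * f ρ) := by
        have := hαdiff (x - 3 * f ρ) x
        simpa [abs_of_pos hfp, abs_of_pos (by linarith : (0:ℝ) < 3 * f ρ)] using this
      rw [Real.norm_eq_abs, hE]
      have : |(α (x - 3 * f ρ) - α x) / α x * Real.log (f ρ)|
          = |α (x - 3 * f ρ) - α x| / α x * |Real.log (f ρ)| := by
        rw [abs_mul, abs_div, abs_of_pos hαx]
      rw [this, abs_mul]
      have h3 : |Real.log (f ρ)| * |f ρ| = |Real.log (f ρ)| * f ρ := by
        rw [abs_of_pos hfp]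
      rw [h3]
      calc |α (x - 3 * f ρ) - α x| / α x * |Real.log (f ρ)|
          ≤ K * (3 * f ρ) / α x * |Real.log (f ρ)| := by
            gcongr
        _ = 3 * K / α x * (|Real.log (f ρ)| * f ρ) := by ring
    · have := hfl.abs
      simpa using this.const_mul (3 * K / α x)
  have hexp : Filter.Tendsto (fun ρ => Real.exp (E ρ))
      (nhdsWithin (0:ℝ) (Set.Ioi 0)) (nhds 1) := by
    simpa [Function.comp_def] using (Real.continuous_exp.continuousAt.tendsto.comp hEt)
  refine hexp.congr' ?_
  filter_upwards [hmem] with ρ hρ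
  obtain ⟨hfp, hf1, heq, -⟩ := hf ρ hρ.1 hρ.2
  have h1' : ρ ^ (1 / α x) = f ρ ^ (α (x - 3 * f ρ) / α x) := by
    conv_lhs => rw [← heq]
    rw [← Real.rpow_mul hfp.le, mul_one_div]
  have hrhs : ρ ^ (1 / α x) / f ρ
      = Real.exp (Real.log (f ρ) * (α (x - 3 * f ρ) / α x) - Real.log (f ρ)) := by
    rw [h1', Real.rpow_def_of_pos hfp, Real.exp_sub, Real.exp_log hfp]
  show Real.exp ((α (x - 3 * f ρ) - α x) / α x * Real.log (f ρ)) = ρ ^ (1 / α x) / f ρ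
  rw [hrhs]
  congr 1
  field_simp
end

section
/- Let (Ω, F, P) be a probability space and t₁ > 0. For each t ∈ (0, t₁] let M_t : Ω → [0, ∞) be a random variable such that for every ω the map t ↦ M_t(ω) is nondecreasing. Let F : (0, ∞) → [0, ∞) satisfy F(λR) ≤ λ⁻² F(R) for all R > 0 and all 0 < λ ≤ 1. Let c > 0 and assume P(M_t ≥ R) ≤ c · t · F(R) for all t ∈ (0, t₁] and all R > 0. Let v : (0, t₁] → (0, ∞) be monotone increasing with t ↦ F(v(t)) measurable and ∫₀^{t₁} F(v(t)) dt < ∞. Then, almost surely, lim_{t → 0⁺} M_t / v(t) = 0. -/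
open MeasureTheory

/-- Abstract upper-function criterion (Proposition 3.1): if `M_t` is nondecreasing in `t`,
`P(M_t ≥ R) ≤ c t F(R)` with `F(λR) ≤ λ⁻² F(R)` for `0 < λ ≤ 1`, and the increasing
norming function `v` satisfies `∫₀^{t₁} F(v(t)) dt < ∞`, then almost surely
`M_t / v(t) → 0` as `t → 0⁺`. -/
theorem upper_function_criterion {Ω : Type*} [MeasurableSpace Ω]
    (P : Measure Ω) [IsProbabilityMeasure P]
    (t₁ : ℝ) (ht₁ : 0 < t₁)
    (M : ℝ → Ω → ℝ)
    (hM_meas : ∀ t ∈ Set.Ioc 0 t₁, Measurable (M t))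
    (hM_nonneg : ∀ t ∈ Set.Ioc 0 t₁, ∀ ω, 0 ≤ M t ω)
    (hM_mono : ∀ ω, MonotoneOn (fun t => M t ω) (Set.Ioc 0 t₁))
    (F : ℝ → ℝ) (hF_nonneg : ∀ R > (0 : ℝ), 0 ≤ F R)
    (hF_scale : ∀ R > (0 : ℝ), ∀ l : ℝ, 0 < l → l ≤ 1 → F (l * R) ≤ (l ^ 2)⁻¹ * F R)
    (c : ℝ) (hc : 0 < c)
    (hmax : ∀ t ∈ Set.Ioc 0 t₁, ∀ R > (0 : ℝ),
      P {ω | R ≤ M t ω} ≤ ENNReal.ofReal (c * t * F R))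
    (v : ℝ → ℝ) (hv_pos : ∀ t ∈ Set.Ioc 0 t₁, 0 < v t)
    (hv_mono : MonotoneOn v (Set.Ioc 0 t₁))
    (hint : IntegrableOn (fun t => F (v t)) (Set.Ioc 0 t₁)) :
    ∀ᵐ ω ∂P, Filter.Tendsto (fun t => M t ω / v t) (nhdsWithin 0 (Set.Ioi 0)) (nhds 0) := by
  classical
  set g : ℝ → ℝ := fun t => F (v t) with hg
  have hg_nonneg : ∀ x ∈ Set.Ioc 0 t₁, 0 ≤ g x := fun x hx => hF_nonneg _ (hv_pos x hx)
  -- key: from each level `s` one can descend to a point `s' ∈ (s/4, s/2]` where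
  -- `g` is at most its average over `(s/4, s/2]` plus one.
  have hkey : ∀ s : ℝ, ∃ s', (0 < s → s / 4 < s' ∧ s' ≤ s / 2) ∧
      (0 < s → s ≤ t₁ →
        g s' ≤ (4 / s) * (∫ x in Set.Ioc (s / 4) (s / 2), g x) + 1) := by
    intro s
    by_cases hs : 0 < s
    · by_cases hs1 : s ≤ t₁
      · have hIsub : Set.Ioc (s / 4) (s / 2) ⊆ Set.Ioc 0 t₁ := by
          intro x hx
          exact ⟨lt_of_le_of_lt (by positivity) hx.1, hx.2.trans (by linarith)⟩
        have hInt : IntegrableOn g (Set.Ioc (s / 4) (s / 2)) := hint.mono_set hIsub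
        have hex : ∃ x ∈ Set.Ioc (s / 4) (s / 2),
            g x ≤ (4 / s) * (∫ y in Set.Ioc (s / 4) (s / 2), g y) + 1 := by
          by_contra hcon
          push_neg at hcon
          set J := ∫ y in Set.Ioc (s / 4) (s / 2), g y with hJ
          have h1 : ∫ _y in Set.Ioc (s / 4) (s / 2), ((4 / s) * J + 1) ≤ J := by
            apply setIntegral_mono_on _ hInt measurableSet_Ioc
            · intro x hx
              exact (hcon x hx).le
            · exact integrableOn_const (by simp [Real.volume_Ioc])
          rw [setIntegral_const] at h1
          have hvol : (volume (Set.Ioc (s / 4) (s / 2))).toReal = s / 4 := by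
            rw [Real.volume_Ioc, ENNReal.toReal_ofReal (by linarith)]
            ring
          rw [measureReal_def, hvol, smul_eq_mul] at h1
          have hrw : s / 4 * (4 / s * J + 1) = J + s / 4 := by field_simp
          rw [hrw] at h1
          linarith
        obtain ⟨x, hxI, hxle⟩ := hex
        exact ⟨x, fun _ => ⟨hxI.1, hxI.2⟩, fun _ _ => hxle⟩
      · exact ⟨s / 2, fun _ => ⟨by linarith, le_refl _⟩, fun _ h => absurd h hs1⟩
    · exact ⟨0, fun h => absurd h hs, fun h _ => absurd h hs⟩
  choose next hnext1 hnext2 using hkey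
  set t : ℕ → ℝ := fun n => next^[n] t₁ with ht
  have ht0 : t 0 = t₁ := rfl
  have htsucc : ∀ n, t (n + 1) = next (t n) := fun n => Function.iterate_succ_apply' next n t₁
  have htIoc : ∀ n, t n ∈ Set.Ioc 0 t₁ := by
    intro n
    induction n with
    | zero => exact ⟨ht₁, le_refl _⟩
    | succ n ih =>
      rw [htsucc]
      obtain ⟨h1, h2⟩ := hnext1 (t n) ih.1
      exact ⟨lt_of_le_of_lt (by linarith [ih.1]) h1, h2.trans (by linarith [ih.1, ih.2])⟩
  have ht_pos : ∀ n, 0 < t n := fun n => (htIoc n).1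
  have ht_half : ∀ n, t (n + 1) ≤ t n / 2 := by
    intro n; rw [htsucc]; exact (hnext1 (t n) (ht_pos n)).2
  have ht_quarter : ∀ n, t n / 4 < t (n + 1) := by
    intro n; rw [htsucc]; exact (hnext1 (t n) (ht_pos n)).1
  have ht_bound : ∀ n,
      g (t (n + 1)) ≤ (4 / t n) * (∫ x in Set.Ioc (t n / 4) (t n / 2), g x) + 1 := by
    intro n; rw [htsucc]; exact hnext2 (t n) (ht_pos n) (htIoc n).2
  have ht_anti : Antitone t :=
    antitone_nat_of_succ_le fun n => (ht_half n).trans (by linarith [ht_pos n])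
  have ht_geo : ∀ n, t n ≤ t₁ * (1 / 2) ^ n := by
    intro n
    induction n with
    | zero => simp [ht0]
    | succ n ih =>
      calc t (n + 1) ≤ t n / 2 := ht_half n
        _ ≤ t₁ * (1 / 2) ^ n / 2 := by linarith
        _ = t₁ * (1 / 2) ^ (n + 1) := by ring
  set S : ℕ → ℝ := fun n => ∫ x in Set.Ioc (t n / 4) (t n / 2), g x with hS
  have hIn_sub : ∀ n, Set.Ioc (t n / 4) (t n / 2) ⊆ Set.Ioc 0 t₁ := by
    intro n x hx
    have h1 := ht_pos n
    have h2 := (htIoc n).2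
    exact ⟨lt_of_le_of_lt (by positivity) hx.1, hx.2.trans (by linarith)⟩
  have hS_nonneg : ∀ n, 0 ≤ S n := by
    intro n
    apply setIntegral_nonneg measurableSet_Ioc
    intro x hx
    exact hg_nonneg x (hIn_sub n hx)
  have hdisj : ∀ i j : ℕ, i < j →
      Disjoint (Set.Ioc (t i / 4) (t i / 2)) (Set.Ioc (t j / 4) (t j / 2)) := by
    intro i j hij
    have h1 : t j ≤ t (i + 1) := ht_anti hij
    have h2 : t (i + 1) ≤ t i / 2 := ht_half i
    rw [Set.Ioc_disjoint_Ioc]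
    calc min (t i / 2) (t j / 2) ≤ t j / 2 := min_le_right _ _
      _ ≤ t i / 4 := by linarith
      _ ≤ max (t i / 4) (t j / 4) := le_max_left _ _
  have hS_sum : Summable S := by
    apply summable_of_sum_range_le hS_nonneg (c := ∫ x in Set.Ioc 0 t₁, g x)
    intro n
    have heq : ∑ i ∈ Finset.range n, S i =
        ∫ x in ⋃ i ∈ Finset.range n, Set.Ioc (t i / 4) (t i / 2), g x := by
      rw [integral_biUnion_finset]
      · intro i _; exact measurableSet_Ioc
      · intro i _ j _ hij
        rcases lt_or_gt_of_ne hij with h | h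
        · exact hdisj i j h
        · exact (hdisj j i h).symm
      · intro i _; exact hint.mono_set (hIn_sub i)
    rw [heq]
    apply setIntegral_mono_set hint
    · exact (ae_restrict_iff' measurableSet_Ioc).2 (Filter.Eventually.of_forall hg_nonneg)
    · apply HasSubset.Subset.eventuallyLE
      exact Set.iUnion₂_subset fun i _ => hIn_sub i
  have hsum_t : Summable t := by
    apply Summable.of_nonneg_of_le (fun n => (ht_pos n).le) ht_geo
    exact (summable_geometric_of_lt_one (by norm_num) (by norm_num)).mul_left t₁
  -- Borel–Cantelli for each k
  have hBC : ∀ k : ℕ, ∀ᵐ ω ∂P, ∀ᶠ n in Filter.atTop,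
      ω ∉ {ω | ((k : ℝ) + 1)⁻¹ * v (t (n + 1)) ≤ M (t n) ω} := by
    intro k
    set ε : ℝ := ((k : ℝ) + 1)⁻¹ with hε_def
    have hεpos : 0 < ε := by positivity
    have hε1 : ε ≤ 1 := by
      rw [hε_def]
      rw [inv_le_one_iff₀]
      right; push_cast; linarith [Nat.cast_nonneg (α := ℝ) k]
    apply ae_eventually_notMem
    set u : ℕ → ℝ := fun n => c * (ε ^ 2)⁻¹ * (4 * S n + t n) with hu
    have hu_nonneg : ∀ n, 0 ≤ u n := by
      intro n
      have := hS_nonneg n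
      have := (ht_pos n).le
      positivity
    have hbound : ∀ n, P {ω | ε * v (t (n + 1)) ≤ M (t n) ω} ≤ ENNReal.ofReal (u n) := by
      intro n
      have hR : 0 < v (t (n + 1)) := hv_pos _ (htIoc (n + 1))
      refine (hmax (t n) (htIoc n) (ε * v (t (n + 1))) (by positivity)).trans ?_
      apply ENNReal.ofReal_le_ofReal
      have hFs : F (ε * v (t (n + 1))) ≤ (ε ^ 2)⁻¹ * g (t (n + 1)) :=
        hF_scale _ hR ε hεpos hε1
      have hgb : t n * g (t (n + 1)) ≤ 4 * S n + t n := by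
        have h1 := ht_bound n
        have h2 := ht_pos n
        have h3 : t n * ((4 / t n) * S n + 1) = 4 * S n + t n := by field_simp
        nlinarith [hg_nonneg (t (n + 1)) (htIoc (n + 1))]
      have hFnn : 0 ≤ F (ε * v (t (n + 1))) := hF_nonneg _ (by positivity)
      have hgnn : 0 ≤ g (t (n + 1)) := hg_nonneg _ (htIoc (n + 1))
      calc c * t n * F (ε * v (t (n + 1)))
          ≤ c * t n * ((ε ^ 2)⁻¹ * g (t (n + 1))) := by
            apply mul_le_mul_of_nonneg_left hFs
            exact mul_nonneg hc.le (ht_pos n).le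
        _ = c * (ε ^ 2)⁻¹ * (t n * g (t (n + 1))) := by ring
        _ ≤ u n := by
            apply mul_le_mul_of_nonneg_left hgb
            positivity
    have hu_sum : Summable u := ((hS_sum.mul_left 4).add hsum_t).mul_left _
    have hle : ∑' n, P {ω | ε * v (t (n + 1)) ≤ M (t n) ω} ≤ ENNReal.ofReal (∑' n, u n) := by
      calc ∑' n, P {ω | ε * v (t (n + 1)) ≤ M (t n) ω}
          ≤ ∑' n, ENNReal.ofReal (u n) := ENNReal.tsum_le_tsum hbound
        _ = ENNReal.ofReal (∑' n, u n) := (ENNReal.ofReal_tsum_of_nonneg hu_nonneg hu_sum).symm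
    exact ne_top_of_le_ne_top ENNReal.ofReal_ne_top hle
  filter_upwards [ae_all_iff.mpr hBC] with ω hω
  rw [Metric.tendsto_nhds]
  intro ε hε
  obtain ⟨k, hk⟩ : ∃ k : ℕ, ((k : ℝ) + 1)⁻¹ < ε := by
    obtain ⟨k, hk⟩ := exists_nat_gt ε⁻¹
    refine ⟨k, ?_⟩
    have hkpos : (0 : ℝ) < (k : ℝ) + 1 := by positivity
    have h' : ε⁻¹ < (k : ℝ) + 1 := by linarith
    exact (inv_lt_comm₀ hε hkpos).1 h'
  obtain ⟨N, hN⟩ := Filter.eventually_atTop.1 (hω k)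
  apply Filter.eventually_of_mem
    (Ioc_mem_nhdsGT_of_mem (⟨le_refl 0, ht_pos N⟩ : (0 : ℝ) ∈ Set.Ico 0 (t N)))
  intro s hs
  have hex : ∃ m, t (m + 1) < s := by
    obtain ⟨m, hm⟩ := exists_pow_lt_of_lt_one (div_pos hs.1 ht₁) (by norm_num : (1 : ℝ) / 2 < 1)
    refine ⟨m, lt_of_le_of_lt ((ht_anti (Nat.le_succ m)).trans (ht_geo m)) ?_⟩
    rw [lt_div_iff₀ ht₁] at hm
    linarith [hm]
  set n := Nat.find hex with hn_def
  have hn1 : t (n + 1) < s := Nat.find_spec hex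
  have hnN : N ≤ n := by
    rw [hn_def, Nat.le_find_iff]
    intro m hm hcon
    have : t N ≤ t (m + 1) := ht_anti hm
    linarith [hs.2]
  have hsn : s ≤ t n := by
    rcases Nat.eq_zero_or_pos n with h0 | h0
    · have hN0 : N = 0 := Nat.le_antisymm (h0 ▸ hnN) (Nat.zero_le _)
      rw [h0, ← hN0]
      exact hs.2
    · obtain ⟨m, hm⟩ := Nat.exists_eq_succ_of_ne_zero h0.ne'
      have := Nat.find_min hex (m := m) (by omega)
      rw [hm]
      exact not_lt.1 this
  have hsIoc : s ∈ Set.Ioc 0 t₁ := ⟨hs.1, hsn.trans (htIoc n).2⟩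
  have h2 : M s ω ≤ M (t n) ω := hM_mono ω hsIoc (htIoc n) hsn
  have h3 : M (t n) ω < ((k : ℝ) + 1)⁻¹ * v (t (n + 1)) := not_le.1 (hN n hnN)
  have h4 : v (t (n + 1)) ≤ v s := hv_mono (htIoc (n + 1)) hsIoc hn1.le
  have hvs : 0 < v s := hv_pos s hsIoc
  rw [Real.dist_eq, sub_zero,
    abs_of_nonneg (div_nonneg (hM_nonneg s hsIoc ω) hvs.le), div_lt_iff₀ hvs]
  have hkpos : (0 : ℝ) < ((k : ℝ) + 1)⁻¹ := by positivity
  calc M s ω ≤ M (t n) ω := h2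
    _ < ((k : ℝ) + 1)⁻¹ * v (t (n + 1)) := h3
    _ ≤ ((k : ℝ) + 1)⁻¹ * v s := mul_le_mul_of_nonneg_left h4 hkpos.le
    _ ≤ ε * v s := mul_le_mul_of_nonneg_right hk.le hvs.le
end

section
/- Let (Ω, F, P) be a probability space, x ∈ ℝ, t₁ > 0, and for each t ∈ (0, t₁) let X_t : Ω → ℝ be a random variable. Let g : [1, ∞) → [0, ∞) be monotone nondecreasing, δ > 0, and assume |E[e^{iη(X_t − x)}]| ≤ e^{−δ t g(η)} for all η ≥ 1 and all t ∈ (0, t₁). Let w : (0, t₁) → (0, 1] be nonincreasing, and set L = liminf_{t → 0⁺} t · g(1/w(t)) ∈ [0, ∞]. Then for all reals 1 < a < b: limsup_{t → 0⁺} | ∫_a^b E[e^{iξ(X_t − x)/w(t)}] dξ | ≤ (b − a) · e^{−δ L} (with the convention e^{−∞} = 0). -/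
open MeasureTheory
open scoped Classical

/-- Key intermediate estimate (4.4) for the liminf LIL via the symbol: if the
characteristic functions satisfy `|E e^{iη(X_t−x)}| ≤ e^{−δ t g(η)}` for `η ≥ 1`
and `w` is a nonincreasing norming function with values in `(0,1]`, then, with
`L = liminf_{t→0⁺} t g(1/w(t)) ∈ [0,∞]`, for all `1 < a < b`:
`limsup_{t→0⁺} |∫_a^b E[e^{iξ(X_t−x)/w(t)}] dξ| ≤ (b−a) e^{−δL}` (with `e^{−∞} = 0`). -/
theorem limsup_char_integral_bound {Ω : Type*} [MeasurableSpace Ω]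
    (P : Measure Ω) [IsProbabilityMeasure P]
    (x t₁ : ℝ) (ht₁ : 0 < t₁)
    (X : ℝ → Ω → ℝ) (hX : ∀ t ∈ Set.Ioo 0 t₁, Measurable (X t))
    (g : ℝ → ℝ) (hg_nonneg : ∀ η : ℝ, 1 ≤ η → 0 ≤ g η)
    (hg_mono : MonotoneOn g (Set.Ici 1))
    (δ : ℝ) (hδ : 0 < δ)
    (hchar : ∀ η : ℝ, 1 ≤ η → ∀ t ∈ Set.Ioo 0 t₁,
      ‖∫ ω, Complex.exp (Complex.I * (η : ℂ) * ((X t ω - x : ℝ) : ℂ)) ∂P‖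
        ≤ Real.exp (-δ * t * g η))
    (w : ℝ → ℝ) (hw_pos : ∀ t ∈ Set.Ioo 0 t₁, 0 < w t)
    (hw_le : ∀ t ∈ Set.Ioo 0 t₁, w t ≤ 1)
    (hw_anti : AntitoneOn w (Set.Ioo 0 t₁))
    (L : ENNReal)
    (hL : L = Filter.liminf (fun t => ENNReal.ofReal (t * g (1 / w t)))
      (nhdsWithin 0 (Set.Ioi 0)))
    (a b : ℝ) (ha : 1 < a) (hab : a < b) :
    Filter.limsup
      (fun t => ‖∫ ξ in a..b,
        ∫ ω, Complex.exp (Complex.I * (ξ : ℂ) * ((X t ω - x : ℝ) : ℂ) / ((w t : ℝ) : ℂ)) ∂P‖)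
      (nhdsWithin 0 (Set.Ioi 0))
      ≤ (b - a) * (if L = ⊤ then 0 else Real.exp (-δ * L.toReal)) := by
  set F : ℝ → ℝ := fun t => ‖∫ ξ in a..b,
        ∫ ω, Complex.exp (Complex.I * (ξ : ℂ) * ((X t ω - x : ℝ) : ℂ) / ((w t : ℝ) : ℂ)) ∂P‖
    with hF
  have hab' : a ≤ b := hab.le
  have hba : 0 ≤ b - a := by linarith
  set l : Filter ℝ := nhdsWithin 0 (Set.Ioi 0) with hl
  have hmem : ∀ᶠ t in l, t ∈ Set.Ioo 0 t₁ :=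
    Ioo_mem_nhdsGT_of_mem ⟨le_refl 0, ht₁⟩
  -- the key pointwise bound
  have key : ∀ t ∈ Set.Ioo 0 t₁, F t ≤ Real.exp (-δ * (t * g (1 / w t))) * (b - a) := by
    intro t ht
    have hwt : 0 < w t := hw_pos t ht
    have hw1 : w t ≤ 1 := hw_le t ht
    have hbound : ∀ ξ ∈ Set.uIoc a b,
        ‖∫ ω, Complex.exp (Complex.I * (ξ : ℂ) * ((X t ω - x : ℝ) : ℂ) / ((w t : ℝ) : ℂ)) ∂P‖
          ≤ Real.exp (-δ * (t * g (1 / w t))) := by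
      intro ξ hξ
      rw [Set.uIoc_of_le hab'] at hξ
      have hξa : a < ξ := hξ.1
      have hξ1 : 1 ≤ ξ := by linarith
      have hη : (1 : ℝ) ≤ ξ / w t := by
        rw [le_div_iff₀ hwt]; linarith
      have hrw : ∀ z : ℂ, Complex.I * (ξ : ℂ) * z / ((w t : ℝ) : ℂ)
          = Complex.I * ((ξ / w t : ℝ) : ℂ) * z := by
        intro z; push_cast; ring
      have hbd := hchar (ξ / w t) hη t ht
      have heq : (∫ ω, Complex.exp (Complex.I * (ξ : ℂ) * ((X t ω - x : ℝ) : ℂ)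
            / ((w t : ℝ) : ℂ)) ∂P)
          = ∫ ω, Complex.exp (Complex.I * ((ξ / w t : ℝ) : ℂ) * ((X t ω - x : ℝ) : ℂ)) ∂P := by
        congr 1; funext ω; rw [hrw]
      rw [heq]
      have h2 : Real.exp (-δ * t * g (ξ / w t)) ≤ Real.exp (-δ * (t * g (1 / w t))) := by
        apply Real.exp_le_exp.2
        have h1w : (1 : ℝ) ≤ 1 / w t := by
          rw [le_div_iff₀ hwt]; linarith
        have hle : (1 : ℝ) / w t ≤ ξ / w t := by gcongr
        have := hg_mono h1w (le_trans h1w hle) hle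
        nlinarith [mul_nonneg (mul_nonneg hδ.le ht.1.le) (sub_nonneg.2 this)]
      calc ‖∫ ω, Complex.exp (Complex.I * ((ξ / w t : ℝ) : ℂ) * ((X t ω - x : ℝ) : ℂ)) ∂P‖
          = ‖∫ ω, Complex.exp (Complex.I * ((ξ / w t : ℝ) : ℂ)
              * ((X t ω - x : ℝ) : ℂ)) ∂P‖ := rfl
        _ ≤ Real.exp (-δ * t * g (ξ / w t)) := hbd
        _ ≤ Real.exp (-δ * (t * g (1 / w t))) := h2
    have := intervalIntegral.norm_integral_le_of_norm_le_const hbound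
    rw [abs_of_nonneg hba] at this
    exact this
  -- boundedness facts
  have hF_nonneg : ∀ t, 0 ≤ F t := fun t => norm_nonneg _
  have hco : Filter.IsCoboundedUnder (· ≤ ·) l F :=
    Filter.isCoboundedUnder_le_of_le l hF_nonneg
  -- main claim: limsup ≤ y for every y above the target
  set T : ℝ := (b - a) * (if L = ⊤ then 0 else Real.exp (-δ * L.toReal)) with hT
  have claim : ∀ y : ℝ, T < y → Filter.limsup F l ≤ y := by
    intro y hy
    -- find a good M
    obtain ⟨M, hM0, hMlt, hMy⟩ : ∃ M : ℝ, 0 ≤ M ∧ (M = 0 ∨ ENNReal.ofReal M < L) ∧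
        Real.exp (-δ * M) * (b - a) ≤ y := by
      by_cases hLtop : L = ⊤
      · have hT0 : T = 0 := by simp [hT, hLtop]
        have hy0 : 0 < y := by rw [hT0] at hy; exact hy
        have htend : Filter.Tendsto (fun M : ℝ => Real.exp (-δ * M) * (b - a))
            Filter.atTop (nhds 0) := by
          have h1 : Filter.Tendsto (fun M : ℝ => -δ * M) Filter.atTop Filter.atBot :=
            Filter.Tendsto.const_mul_atTop_of_neg (neg_neg_iff_pos.2 hδ) Filter.tendsto_id
          have h2 := Real.tendsto_exp_atBot.comp h1
          have := h2.mul_const (b - a)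
          simpa using this
        have hev : ∀ᶠ M in Filter.atTop, Real.exp (-δ * M) * (b - a) < y :=
          htend.eventually_lt_const hy0
        obtain ⟨M, hMy, hM0⟩ := (hev.and (Filter.eventually_ge_atTop (0 : ℝ))).exists
        exact ⟨M, hM0, Or.inr (by simp [hLtop]), hMy.le⟩
      · by_cases hL0 : L = 0
        · refine ⟨0, le_refl 0, Or.inl rfl, ?_⟩
          have : T = (b - a) * Real.exp 0 := by
            simp [hT, hLtop, hL0]
          rw [Real.exp_zero] at this
          simp only [mul_one] at this
          rw [mul_zero, Real.exp_zero, one_mul]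
          linarith [hy, this]
        · have hLpos : 0 < L.toReal := ENNReal.toReal_pos hL0 hLtop
          have hTval : T = Real.exp (-δ * L.toReal) * (b - a) := by
            simp [hT, hLtop]; ring
          have hcont : Filter.Tendsto (fun M : ℝ => Real.exp (-δ * M) * (b - a))
              (nhds L.toReal) (nhds (Real.exp (-δ * L.toReal) * (b - a))) := by
            exact (Real.continuous_exp.comp (continuous_const.mul continuous_id)).continuousAt.mono_left
              (le_refl _) |>.mul tendsto_const_nhds
          have hev : ∀ᶠ M in nhds L.toReal, Real.exp (-δ * M) * (b - a) < y := by
            apply hcont.eventually_lt_const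
            rw [← hTval]; exact hy
          obtain ⟨ε, hε, hball⟩ := Metric.eventually_nhds_iff.1 hev
          set M := max (L.toReal - ε / 2) (L.toReal / 2) with hM
          have hMlt' : M < L.toReal := by
            apply max_lt <;> linarith
          have hM0' : 0 < M := lt_of_lt_of_le (by linarith) (le_max_right _ _)
          have hMball : dist M L.toReal < ε := by
            rw [Real.dist_eq, abs_of_nonpos (by linarith)]
            have : L.toReal - ε / 2 ≤ M := le_max_left _ _
            linarith
          refine ⟨M, hM0'.le, Or.inr ?_, (hball hMball).le⟩
          exact (ENNReal.ofReal_lt_iff_lt_toReal hM0'.le hLtop).2 hMlt'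
    -- eventually t * g (1/w t) ≥ M
    have hev : ∀ᶠ t in l, M ≤ t * g (1 / w t) := by
      rcases hMlt with hM | hM
      · apply hmem.mono
        intro t ht
        have hwt : 0 < w t := hw_pos t ht
        have h1w : (1 : ℝ) ≤ 1 / w t := by
          rw [le_div_iff₀ hwt]; linarith [hw_le t ht]
        rw [hM]
        exact mul_nonneg ht.1.le (hg_nonneg _ h1w)
      · rw [hL] at hM
        have := Filter.eventually_lt_of_lt_liminf hM
        apply this.mono
        intro t ht
        by_contra hcon
        push_neg at hcon
        exact absurd (ENNReal.ofReal_le_ofReal hcon.le) (not_le.2 ht)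
    -- combine
    have hFle : ∀ᶠ t in l, F t ≤ y := by
      filter_upwards [hmem, hev] with t ht hMt
      refine le_trans (key t ht) (le_trans ?_ hMy)
      have : Real.exp (-δ * (t * g (1 / w t))) ≤ Real.exp (-δ * M) := by
        apply Real.exp_le_exp.2
        nlinarith
      nlinarith
    exact Filter.limsup_le_of_le hco hFle
  by_contra hcon
  push_neg at hcon
  obtain ⟨y, hy1, hy2⟩ := exists_between hcon
  exact absurd (claim y hy1) (not_le.2 hy2)
end

section
/- Let 0 < α₀ ≤ α₁ < 2 and let α : ℝ → [α₀, α₁] be continuously differentiable with bounded derivative. Fix x ∈ ℝ and ε > 0. For t ∈ (0, e^{−e}) set ℓ(t) = log(1/t) · (log log(1/t))^{1+ε} and v(t) = (t·ℓ(t))^{1/α(x)}. Then there exists δ ∈ (0, e^{−e}) such that ∫₀^δ sup_{|y−x| ≤ v(t)} ( 1/(t·ℓ(t)) )^{α(y)/α(x)} dt < ∞. -/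
open MeasureTheory

/-- Auxiliary globally-defined version of `t * ℓ t`. -/
noncomputable def auxS (ε t : ℝ) : ℝ :=
  t * (Real.log (1/t) * Real.exp (Real.log (Real.log (Real.log (1/t))) * (1 + ε)))

/-- Auxiliary globally-defined countable family whose supremum computes the sup
over the ball. -/
noncomputable def auxH (α : ℝ → ℝ) (ε a x : ℝ) (q : ℚ) (t : ℝ) : ℝ :=
  Real.exp (Real.log (1 / auxS ε t) *
    (α (x + (max (-1) (min 1 (q:ℝ))) * Real.exp (Real.log (auxS ε t) * (1/a))) / a))

lemma measurable_auxH (α : ℝ → ℝ) (hα : Measurable α) (ε a x : ℝ) (q : ℚ) :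
    Measurable (auxH α ε a x q) := by
  unfold auxH auxS
  have m1 : Measurable fun t : ℝ => 1/t := measurable_const.div measurable_id
  have m2 : Measurable fun t : ℝ => Real.log (1/t) := Real.measurable_log.comp m1
  have m3 : Measurable fun t : ℝ => Real.log (Real.log (Real.log (1/t))) :=
    Real.measurable_log.comp (Real.measurable_log.comp m2)
  have mS : Measurable fun t : ℝ =>
      t * (Real.log (1/t) * Real.exp (Real.log (Real.log (Real.log (1/t))) * (1 + ε))) :=
    measurable_id.mul (m2.mul (Real.measurable_exp.comp (m3.mul measurable_const)))
  have mlogS : Measurable fun t : ℝ => Real.log (1 / (t *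
      (Real.log (1/t) * Real.exp (Real.log (Real.log (Real.log (1/t))) * (1 + ε))))) :=
    Real.measurable_log.comp (measurable_const.div mS)
  have mV : Measurable fun t : ℝ => Real.exp (Real.log (t *
      (Real.log (1/t) * Real.exp (Real.log (Real.log (Real.log (1/t))) * (1 + ε)))) * (1/a)) :=
    Real.measurable_exp.comp ((Real.measurable_log.comp mS).mul measurable_const)
  exact Real.measurable_exp.comp (mlogS.mul ((hα.comp
    (measurable_const.add (mV.const_mul _))).div_const a))

lemma measurable_auxG (α : ℝ → ℝ) (hα : Measurable α) (ε a x : ℝ) :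
    Measurable (fun t => ⨆ q : ℚ, auxH α ε a x q t) :=
  Measurable.iSup (fun q => measurable_auxH α hα ε a x q)

/-- The supremum over the closed ball equals a countable supremum over clamped
rationals. -/
lemma csSup_ball_eq (a s w P x : ℝ) (α : ℝ → ℝ) (hαc : Continuous α)
    (hs0 : 0 < s) (hw0 : 0 < w)
    (est : ∀ y, |y - x| ≤ w → Real.exp (Real.log (1/s) * (α y / a)) ≤ P) :
    sSup ((fun y => (1/s) ^ (α y / a)) '' {y | |y - x| ≤ w})
      = ⨆ q : ℚ, Real.exp (Real.log (1/s) *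
          (α (x + (max (-1) (min 1 (q:ℝ))) * w) / a)) := by
  set Φ : ℝ → ℝ := fun r => Real.exp (Real.log (1/s) *
    (α (x + (max (-1) (min 1 r)) * w) / a)) with hΦ_def
  have hs0' : (0:ℝ) < 1/s := by positivity
  have hrpow : ∀ y, (1/s) ^ (α y / a) = Real.exp (Real.log (1/s) * (α y / a)) :=
    fun y => Real.rpow_def_of_pos hs0' _
  have hclamp : ∀ r : ℝ, |max (-1) (min 1 r)| ≤ 1 := by
    intro r
    rw [abs_le]
    constructor
    · exact le_max_left _ _
    · exact max_le (by norm_num) (min_le_left _ _)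
  have hmemball : ∀ r : ℝ, |(x + (max (-1) (min 1 r)) * w) - x| ≤ w := by
    intro r
    rw [add_sub_cancel_left, abs_mul, abs_of_pos hw0]
    nth_rewrite 2 [← one_mul w]
    exact mul_le_mul_of_nonneg_right (hclamp r) hw0.le
  set S := (fun y => (1/s) ^ (α y / a)) '' {y | |y - x| ≤ w} with hS_def
  have hSne : S.Nonempty := ⟨_, ⟨x, by simp [hw0.le], rfl⟩⟩
  have hSbdd : BddAbove S := by
    refine ⟨P, ?_⟩
    rintro - ⟨y, hy, rfl⟩
    show (1/s) ^ (α y / a) ≤ P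
    rw [hrpow]
    exact est y hy
  have hRbdd : BddAbove (Set.range fun q : ℚ => Φ (q:ℝ)) := by
    refine ⟨P, ?_⟩
    rintro - ⟨q, rfl⟩
    exact est _ (hmemball (q:ℝ))
  have hΦc : Continuous Φ := by
    apply Real.continuous_exp.comp
    apply continuous_const.mul
    apply Continuous.div_const
    exact hαc.comp (continuous_const.add
      ((continuous_const.max (continuous_const.min continuous_id)).mul continuous_const))
  apply le_antisymm
  · apply csSup_le hSne
    rintro - ⟨y, hy, rfl⟩
    set z := (y - x) / w with hz_def
    have hz : |z| ≤ 1 := by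
      rw [hz_def, abs_div, abs_of_pos hw0, div_le_one hw0]
      exact hy
    have hclz : max (-1) (min 1 z) = z :=
      by rw [min_eq_right (abs_le.1 hz).2, max_eq_right (abs_le.1 hz).1]
    have hyz : x + (max (-1) (min 1 z)) * w = y := by
      rw [hclz, hz_def, div_mul_cancel₀ _ hw0.ne']
      ring
    have hzcl : z ∈ closure (Set.range ((↑) : ℚ → ℝ)) := Rat.denseRange_cast z
    obtain ⟨u, hu_mem, hu_tend⟩ := mem_closure_iff_seq_limit.1 hzcl
    choose qn hqn using hu_mem
    have hqtend : Filter.Tendsto (fun n => ((qn n : ℚ) : ℝ)) Filter.atTop (nhds z) := by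
      convert hu_tend using 2 with n
      exact hqn n
    have htend : Filter.Tendsto (fun n => Φ ((qn n : ℚ) : ℝ)) Filter.atTop (nhds (Φ z)) :=
      (hΦc.tendsto z).comp hqtend
    have hval : Φ z = (1/s) ^ (α y / a) := by
      rw [hΦ_def]
      simp only []
      rw [hyz, hrpow]
    show (1/s) ^ (α y / a) ≤ _
    rw [← hval]
    exact le_of_tendsto htend (Filter.Eventually.of_forall fun n => le_ciSup hRbdd (qn n))
  · apply ciSup_le
    intro q
    apply le_csSup hSbdd
    refine ⟨_, hmemball (q:ℝ), ?_⟩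
    show (1/s) ^ _ = _
    rw [hrpow]

/-- Example 3.3 (with one iterated logarithm): for a stable-like index
`α : ℝ → [α₀,α₁] ⊂ (0,2)` (continuously differentiable, bounded derivative),
with `ℓ(t) = log(1/t)·(log log(1/t))^{1+ε}` and `v(t) = (t ℓ(t))^{1/α(x)}`,
the integral test
`∫₀^δ sup_{|y−x|≤v(t)} (1/(t ℓ(t)))^{α(y)/α(x)} dt < ∞`
holds for some `δ ∈ (0, e^{−e})`. -/
theorem stable_like_integral_test (α₀ α₁ : ℝ) (h0 : 0 < α₀) (h01 : α₀ ≤ α₁) (h1 : α₁ < 2)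
    (α : ℝ → ℝ) (hα : ContDiff ℝ 1 α) (K : ℝ) (hK : ∀ y, |deriv α y| ≤ K)
    (hrange : ∀ y, α y ∈ Set.Icc α₀ α₁)
    (x ε : ℝ) (hε : 0 < ε)
    (ℓ v : ℝ → ℝ)
    (hℓ : ∀ t : ℝ, 0 < t → t < Real.exp (-Real.exp 1) →
      ℓ t = Real.log (1 / t) * Real.log (Real.log (1 / t)) ^ ((1 : ℝ) + ε))
    (hv : ∀ t : ℝ, 0 < t → t < Real.exp (-Real.exp 1) →
      v t = (t * ℓ t) ^ (1 / α x)) :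
    ∃ δ : ℝ, 0 < δ ∧ δ < Real.exp (-Real.exp 1) ∧
      IntegrableOn
        (fun t => sSup ((fun y => (1 / (t * ℓ t)) ^ (α y / α x)) '' {y | |y - x| ≤ v t}))
        (Set.Ioo 0 δ) := by
  classical
  set a : ℝ := α x with ha_def
  have ha0 : 0 < a := lt_of_lt_of_le h0 (hrange x).1
  have hK0 : 0 ≤ K := le_trans (abs_nonneg _) (hK x)
  set E : ℝ := Real.exp (-Real.exp 1) with hE_def
  have hE0 : 0 < E := Real.exp_pos _
  -- Lipschitz bound for α
  have hd : Differentiable ℝ α := hα.differentiable one_ne_zero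
  have hlip : LipschitzWith ⟨K, hK0⟩ α := by
    apply lipschitzWith_of_nnnorm_deriv_le hd
    intro y
    apply NNReal.coe_le_coe.1
    exact (by simpa [Real.norm_eq_abs] using hK y : ‖deriv α y‖ ≤ K)
  have lips : ∀ y, |α y - α x| ≤ K * |y - x| := by
    intro y
    have := hlip.dist_le_mul y x
    rw [Real.dist_eq, Real.dist_eq] at this; exact this
  -- parameters for the choice of δ
  have h2ε : (0:ℝ) < 2 + ε := by linarith
  set b : ℝ := 2⁻¹ * (2 + ε)⁻¹ with hb_def
  have hb0 : 0 < b := by positivity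
  have hbε : b * (2 + ε) = 1/2 := by rw [hb_def]; field_simp
  set C : ℝ := (b ^ (2 + ε))⁻¹ with hC_def
  have hC0 : 0 < C := by
    have := Real.rpow_pos_of_pos hb0 (2 + ε); positivity
  set δ : ℝ := min (E/2) ((2*C)⁻¹ ^ (2:ℕ)) with hδ_def
  have hδ0 : 0 < δ := by
    apply lt_min (by positivity); positivity
  have hδE : δ < E := lt_of_le_of_lt (min_le_left _ _) (by linarith)
  have hδC : δ ≤ (2*C)⁻¹ ^ (2:ℕ) := min_le_right _ _
  refine ⟨δ, hδ0, hδE, ?_⟩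
  -- basic facts for t ∈ (0, δ]
  have facts : ∀ t ∈ Set.Ioc (0:ℝ) δ,
      Real.exp 1 < Real.log (1/t) ∧ 1 < Real.log (Real.log (1/t)) ∧
      0 < t * ℓ t ∧ t * ℓ t ≤ 1/2 ∧
      ℓ t = Real.log (1/t) * Real.log (Real.log (1/t)) ^ ((1:ℝ) + ε) := by
    intro t ht
    obtain ⟨ht0, htδ⟩ := ht
    have htE : t < E := lt_of_le_of_lt htδ hδE
    have htE' : t < Real.exp (-Real.exp 1) := hE_def ▸ htE
    have hLgt : Real.exp 1 < Real.log (1/t) := by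
      have h1 : Real.log t < Real.log E := Real.log_lt_log ht0 htE
      rw [hE_def, Real.log_exp] at h1
      rw [one_div, Real.log_inv]
      linarith
    set L : ℝ := Real.log (1/t) with hL_def
    have hL1 : 1 < L := lt_trans (by nlinarith [Real.add_one_le_exp (1:ℝ)]) hLgt
    have hL0 : 0 < L := by linarith
    have hM1 : 1 < Real.log L := by
      calc (1:ℝ) = Real.log (Real.exp 1) := (Real.log_exp 1).symm
      _ < Real.log L := Real.log_lt_log (Real.exp_pos 1) hLgt
    set M : ℝ := Real.log L with hM_def
    have hM0 : 0 < M := by linarith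
    have hℓt : ℓ t = L * M ^ ((1:ℝ) + ε) := hℓ t ht0 htE'
    have h1ε : (0:ℝ) ≤ 1 + ε := by linarith
    have hpos : 0 < t * ℓ t := by
      rw [hℓt]; have := Real.rpow_pos_of_pos hM0 (1 + ε); positivity
    refine ⟨hLgt, hM1, hpos, ?_, hℓt⟩
    -- t * ℓ t ≤ 1/2
    have hML : M ≤ L := le_trans (Real.log_le_sub_one_of_pos hL0) (by linarith)
    have h1 : M ^ ((1:ℝ) + ε) ≤ L ^ ((1:ℝ) + ε) := Real.rpow_le_rpow hM0.le hML h1ε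
    have h2 : L * L ^ ((1:ℝ) + ε) = L ^ ((2:ℝ) + ε) := by
      rw [← Real.rpow_one_add' hL0.le (by linarith : (1:ℝ) + (1 + ε) ≠ 0)]
      congr 1
      ring
    have h3 : L ≤ (1/t) ^ b / b := Real.log_le_rpow_div (by positivity) hb0
    have h4 : L ^ ((2:ℝ) + ε) ≤ ((1/t) ^ b / b) ^ ((2:ℝ) + ε) :=
      Real.rpow_le_rpow hL0.le h3 (by linarith)
    have h5 : ((1/t) ^ b / b) ^ ((2:ℝ) + ε) = (1/t) ^ ((1:ℝ)/2) * C := by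
      rw [Real.div_rpow (by positivity) hb0.le, ← Real.rpow_mul (by positivity), hbε,
        hC_def, div_eq_mul_inv]
    have h6 : t * (1/t) ^ ((1:ℝ)/2) = t ^ ((1:ℝ)/2) := by
      rw [one_div t, Real.inv_rpow ht0.le, ← Real.rpow_neg ht0.le]
      nth_rewrite 1 [← Real.rpow_one t]
      rw [← Real.rpow_add ht0]; norm_num
    have h7 : t ^ ((1:ℝ)/2) ≤ (2*C)⁻¹ := by
      calc t ^ ((1:ℝ)/2) ≤ ((2*C)⁻¹ ^ (2:ℕ)) ^ ((1:ℝ)/2) :=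
            Real.rpow_le_rpow ht0.le (le_trans htδ hδC) (by norm_num)
      _ = (2*C)⁻¹ := by
          rw [← Real.rpow_natCast (2*C)⁻¹ 2, ← Real.rpow_mul (by positivity)]
          norm_num
    calc t * ℓ t = t * (L * M ^ ((1:ℝ)+ε)) := by rw [hℓt]
    _ ≤ t * (L * L ^ ((1:ℝ)+ε)) := by
        apply mul_le_mul_of_nonneg_left _ ht0.le
        exact mul_le_mul_of_nonneg_left h1 hL0.le
    _ = t * (L ^ ((2:ℝ)+ε)) := by rw [h2]
    _ ≤ t * ((1/t) ^ ((1:ℝ)/2) * C) := by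
        apply mul_le_mul_of_nonneg_left _ ht0.le
        rw [← h5]; exact le_trans h4 (le_refl _)
    _ = t ^ ((1:ℝ)/2) * C := by rw [← mul_assoc, h6]
    _ ≤ (2*C)⁻¹ * C := mul_le_mul_of_nonneg_right h7 hC0.le
    _ = 1/2 := by field_simp [mul_comm]
  -- main pointwise estimate
  have est : ∀ t ∈ Set.Ioc (0:ℝ) δ, ∀ y, |y - x| ≤ v t →
      Real.exp (Real.log (1/(t * ℓ t)) * (α y / a)) ≤ Real.exp K / (t * ℓ t) := by
    intro t ht y hy
    obtain ⟨-, -, hs0, hs1, -⟩ := facts t ht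
    have htE' : t < Real.exp (-Real.exp 1) := hE_def ▸ lt_of_le_of_lt ht.2 hδE
    have hw : v t = (t * ℓ t) ^ (1/a) := hv t ht.1 htE'
    set s : ℝ := t * ℓ t with hs_def
    set w : ℝ := v t with hw_def
    have hw0 : 0 < w := by rw [hw]; positivity
    have hlogs : 0 < Real.log (1/s) := Real.log_pos (one_lt_one_div hs0 (by linarith))
    have hαy : α y ≤ a + K * w := by
      have h1 := (abs_le.1 (lips y)).2
      have h2 : K * |y - x| ≤ K * w := mul_le_mul_of_nonneg_left hy hK0
      rw [← ha_def] at h1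
      linarith
    have hlogw : Real.log (1/s) = a * Real.log (1/w) := by
      rw [one_div, one_div, Real.log_inv, Real.log_inv, hw, Real.log_rpow hs0]
      field_simp
    have hwlog : w * Real.log (1/w) ≤ 1 := by
      have h1 := Real.log_le_sub_one_of_pos (show 0 < 1/w by positivity)
      have h2 : w * Real.log (1/w) ≤ w * (1/w - 1) := mul_le_mul_of_nonneg_left h1 hw0.le
      have h3 : w * (1/w - 1) = 1 - w := by field_simp
      linarith
    have hexp : Real.log (1/s) * (α y / a) ≤ Real.log (1/s) + K := by
      have h1 : α y / a ≤ (a + K * w) / a := by gcongr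
      have h2 : Real.log (1/s) * (α y / a) ≤ Real.log (1/s) * ((a + K * w) / a) :=
        mul_le_mul_of_nonneg_left h1 hlogs.le
      have h3 : Real.log (1/s) * ((a + K * w) / a)
          = Real.log (1/s) + K * (w * Real.log (1/w)) := by
        rw [hlogw]; field_simp
      have h4 : K * (w * Real.log (1/w)) ≤ K * 1 := mul_le_mul_of_nonneg_left hwlog hK0
      linarith
    calc Real.exp (Real.log (1/s) * (α y / a)) ≤ Real.exp (Real.log (1/s) + K) :=
          Real.exp_le_exp.2 hexp
    _ = Real.exp K / s := by
        rw [Real.exp_add, Real.exp_log (by positivity : (0:ℝ) < 1/s)]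
        field_simp [mul_comm]
  -- integrability of the dominating function 1/(t ℓ t)
  have hint : IntegrableOn (fun t => (t * ℓ t)⁻¹) (Set.Ioc 0 δ) := by
    set F : ℝ → ℝ := fun u => ε⁻¹ * Real.exp (Real.log (Real.log (Real.log (1/u))) * (-ε))
      with hF_def
    set aseq : ℕ → ℝ := fun n => δ * (1/(n+1)) with haseq_def
    have haseq : ∀ n : ℕ, 0 < aseq n ∧ aseq n ≤ δ := by
      intro n
      constructor
      · positivity
      · rw [haseq_def]
        nth_rewrite 2 [← mul_one δ]
        apply mul_le_mul_of_nonneg_left _ hδ0.le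
        rw [div_le_one (by positivity)]
        simp
    have hmem : ∀ n : ℕ, ∀ u ∈ Set.Icc (aseq n) δ, u ∈ Set.Ioc (0:ℝ) δ :=
      fun n u hu => ⟨lt_of_lt_of_le (haseq n).1 hu.1, hu.2⟩
    have hcont : ∀ n : ℕ, ContinuousOn (fun t => (t * ℓ t)⁻¹) (Set.Icc (aseq n) δ) := by
      intro n
      apply ContinuousOn.congr (f := fun t =>
        (t * (Real.log (1/t) * Real.log (Real.log (1/t)) ^ ((1:ℝ) + ε)))⁻¹)
      · intro u hu
        obtain ⟨hu0, huδ⟩ := hmem n u hu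
        obtain ⟨hL, hM, hs0, -, hft⟩ := facts u (hmem n u hu)
        have hL0 : 0 < Real.log (1/u) := lt_trans (Real.exp_pos 1) hL
        have hM0 : 0 < Real.log (Real.log (1/u)) := by linarith
        apply ContinuousAt.continuousWithinAt
        have c1 : ContinuousAt (fun t : ℝ => 1/t) u :=
          ContinuousAt.div continuousAt_const continuousAt_id hu0.ne'
        have c2 : ContinuousAt (fun t : ℝ => Real.log (1/t)) u :=
          (Real.continuousAt_log (by positivity)).comp c1
        have c3 : ContinuousAt (fun t : ℝ => Real.log (Real.log (1/t))) u :=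
          c2.log hL0.ne'
        have c4 : ContinuousAt (fun t : ℝ => Real.log (Real.log (1/t)) ^ ((1:ℝ) + ε)) u :=
          c3.rpow_const (Or.inl hM0.ne')
        have c5 : ContinuousAt (fun t : ℝ =>
            t * (Real.log (1/t) * Real.log (Real.log (1/t)) ^ ((1:ℝ) + ε))) u :=
          continuousAt_id.mul (c2.mul c4)
        apply c5.inv₀
        rw [← hft]; exact hs0.ne'
      · intro u hu
        show (u * ℓ u)⁻¹ = _
        rw [(facts u (hmem n u hu)).2.2.2.2]
    have hfi : ∀ n : ℕ, IntegrableOn (fun t => (t * ℓ t)⁻¹) (Set.Ioc (aseq n) δ) :=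
      fun n => ((hcont n).integrableOn_Icc).mono_set Set.Ioc_subset_Icc_self
    have hderiv : ∀ n : ℕ, ∀ u ∈ Set.uIcc (aseq n) δ, HasDerivAt F ((u * ℓ u)⁻¹) u := by
      intro n u hu
      rw [Set.uIcc_of_le (haseq n).2] at hu
      obtain ⟨hu0, huδ⟩ := hmem n u hu
      obtain ⟨hL, hM, hs0, -, hft⟩ := facts u (hmem n u hu)
      set L := Real.log (1/u) with hL_def
      set M := Real.log L with hM_def
      have hL0 : 0 < L := lt_trans (Real.exp_pos 1) hL
      have hM0 : 0 < M := by rw [hM_def]; linarith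
      have h1 : HasDerivAt (fun w : ℝ => 1/w) (-(u^2)⁻¹) u := by
        simpa [one_div] using hasDerivAt_inv hu0.ne'
      have h2 : HasDerivAt (fun w : ℝ => Real.log (1/w)) (-(u^2)⁻¹ / (1/u)) u :=
        h1.log (by positivity)
      have h3 := h2.log hL0.ne'
      have h4 := h3.log hM0.ne'
      have h5 := (h4.mul_const (-ε)).exp
      have h6 := h5.const_mul ε⁻¹
      refine h6.congr_deriv ?_
      set A := Real.exp (Real.log M * ε) with hA_def
      have hA0 : 0 < A := Real.exp_pos _
      have hAneg : Real.exp (Real.log M * (-ε)) = A⁻¹ := by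
        rw [mul_neg, Real.exp_neg]
      have hMA : M ^ ((1:ℝ) + ε) = M * A := by
        rw [Real.rpow_def_of_pos hM0, mul_add, mul_one, Real.exp_add, Real.exp_log hM0]
      rw [hft, ← hL_def, ← hM_def, hMA, hAneg]
      field_simp
    have hItg : ∀ n : ℕ, IntervalIntegrable (fun t => (t * ℓ t)⁻¹) volume (aseq n) δ := by
      intro n
      apply ContinuousOn.intervalIntegrable
      rw [Set.uIcc_of_le (haseq n).2]
      exact hcont n
    have key : ∀ n : ℕ, (∫ x in Set.Ioc (aseq n) δ, ‖(x * ℓ x)⁻¹‖) ≤ F δ := by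
      intro n
      rw [← intervalIntegral.integral_of_le (haseq n).2]
      have heq : ∫ x in (aseq n)..δ, ‖(x * ℓ x)⁻¹‖ = ∫ x in (aseq n)..δ, (x * ℓ x)⁻¹ := by
        apply intervalIntegral.integral_congr
        intro u hu
        rw [Set.uIcc_of_le (haseq n).2] at hu
        exact Real.norm_of_nonneg (inv_nonneg.2 (facts u (hmem n u hu)).2.2.1.le)
      rw [heq, intervalIntegral.integral_eq_sub_of_hasDerivAt (hderiv n) (hItg n)]
      have hFa : 0 ≤ F (aseq n) := by rw [hF_def]; positivity
      linarith
    have htend : Filter.Tendsto aseq Filter.atTop (nhds 0) := by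
      rw [haseq_def]
      simpa [one_div] using tendsto_one_div_add_atTop_nhds_zero_nat.const_mul δ
    exact integrableOn_Ioc_of_intervalIntegral_norm_bounded_left hfi htend
      (Filter.Eventually.of_forall key)
  -- the supremum function agrees on (0, δ) with a measurable function
  have hGeq : ∀ t ∈ Set.Ioo (0:ℝ) δ,
      sSup ((fun y => (1 / (t * ℓ t)) ^ (α y / a)) '' {y | |y - x| ≤ v t})
        = ⨆ q : ℚ, auxH α ε a x q t := by
    intro t ht
    have ht' : t ∈ Set.Ioc (0:ℝ) δ := ⟨ht.1, ht.2.le⟩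
    obtain ⟨hL, hM, hs0, hs1, hℓt⟩ := facts t ht'
    have hL0 : 0 < Real.log (1/t) := lt_trans (Real.exp_pos 1) hL
    have hM0 : 0 < Real.log (Real.log (1/t)) := by linarith
    have htE' : t < Real.exp (-Real.exp 1) := hE_def ▸ lt_of_lt_of_le ht.2 hδE.le
    have hw : v t = (t * ℓ t) ^ (1/a) := hv t ht.1 htE'
    have hw0 : 0 < v t := by rw [hw]; positivity
    have hauxS : auxS ε t = t * ℓ t := by
      unfold auxS
      rw [hℓt, Real.rpow_def_of_pos hM0]
    have hauxH : ∀ q : ℚ, auxH α ε a x q t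
        = Real.exp (Real.log (1/(t * ℓ t)) *
            (α (x + (max (-1) (min 1 (q:ℝ))) * v t) / a)) := by
      intro q
      unfold auxH
      rw [hauxS]
      congr 3
      rw [hw, Real.rpow_def_of_pos hs0]
    rw [csSup_ball_eq a (t * ℓ t) (v t) (Real.exp K / (t * ℓ t)) x α hα.continuous
      hs0 hw0 (est t ht')]
    exact (iSup_congr hauxH).symm
  -- conclude by domination
  have hGmeas := measurable_auxG α hα.continuous.measurable ε a x
  apply Integrable.mono' (g := fun t => Real.exp K * (t * ℓ t)⁻¹)
  · exact ((hint.mono_set Set.Ioo_subset_Ioc_self).const_mul (Real.exp K))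
  · apply (hGmeas.aestronglyMeasurable).congr
    apply (ae_restrict_iff' measurableSet_Ioo).2
    exact ae_of_all _ fun t ht => (hGeq t ht).symm
  · apply (ae_restrict_iff' measurableSet_Ioo).2
    apply ae_of_all _
    intro t ht
    have ht' : t ∈ Set.Ioc (0:ℝ) δ := ⟨ht.1, ht.2.le⟩
    obtain ⟨hL, hM, hs0, hs1, hℓt⟩ := facts t ht'
    have htE' : t < Real.exp (-Real.exp 1) := hE_def ▸ lt_of_lt_of_le ht.2 hδE.le
    have hw : v t = (t * ℓ t) ^ (1/a) := hv t ht.1 htE'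
    have hw0 : 0 < v t := by rw [hw]; positivity
    have hrpow : ∀ y, (1/(t * ℓ t)) ^ (α y / a)
        = Real.exp (Real.log (1/(t * ℓ t)) * (α y / a)) :=
      fun y => Real.rpow_def_of_pos (by positivity) _
    set S := (fun y => (1 / (t * ℓ t)) ^ (α y / a)) '' {y | |y - x| ≤ v t} with hS_def
    have hSne : S.Nonempty := ⟨_, ⟨x, by simp [hw0.le], rfl⟩⟩
    have hub : ∀ p ∈ S, p ≤ Real.exp K / (t * ℓ t) := by
      rintro - ⟨y, hy, rfl⟩
      show (1/(t * ℓ t)) ^ (α y / a) ≤ _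
      rw [hrpow]
      exact est t ht' y hy
    have hSbdd : BddAbove S := ⟨_, hub⟩
    have hmemx : (1/(t * ℓ t)) ^ (α x / a) ∈ S := ⟨x, by simp [hw0.le], rfl⟩
    have hfx : 1/(t * ℓ t) ≤ sSup S := by
      have h1 : (1/(t * ℓ t)) ^ (α x / a) = 1/(t * ℓ t) := by
        rw [← ha_def, div_self ha0.ne', Real.rpow_one]
      calc 1/(t * ℓ t) = (1/(t * ℓ t)) ^ (α x / a) := h1.symm
      _ ≤ sSup S := le_csSup hSbdd hmemx
    have hnonneg : 0 ≤ sSup S := le_trans (by positivity) hfx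
    rw [Real.norm_of_nonneg hnonneg]
    calc sSup S ≤ Real.exp K / (t * ℓ t) := csSup_le hSne hub
    _ = Real.exp K * (t * ℓ t)⁻¹ := by rw [div_eq_mul_inv]
end
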